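/- arXiv:2411.15335 — 2 statements merged into one kernel-verified Lean document; each statement's English description precedes it below -/
import Mathlib

section
/- Let u : B₁⁺ → ℝ and suppose there exist constants C > 0, ρ ∈ (0,1), a sequence (a_n) ⊂ ℝ with |a_n − a_{n+1}| ≤ Cρ^n, and a sequence of symmetric matrices (M_n) with ‖M_n − M_{n+1}‖ ≤ C, such that sup_{x ∈ B_{ρ^n}⁺} |u(x) − a_n x_d − M_n x · x| ≤ ρ^{2n} for all n ∈ ℕ. Then there exist a_∞ ∈ ℝ and a constant C' > 0 (depending only on C and ρ) such that for all x ∈ B_{1/2}⁺, |u(x) − a_∞ x_d| ≤ C' |x|² log(1/|x|). -/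
open scoped RealInnerProductSpace

/-- From the iterative quadratic approximation scheme
`sup_{B_{ρ^n}⁺} |u − a_n x_d − M_n x·x| ≤ ρ^{2n}` with `|a_n − a_{n+1}| ≤ Cρ^n` and
`‖M_n − M_{n+1}‖ ≤ C`, one gets the `C^{1,Log-Lip}` estimate
`|u(x) − a_∞ x_d| ≤ C' |x|² log(1/|x|)` on `B_{1/2}⁺`. -/
theorem stmt_2 {d : ℕ} (u : EuclideanSpace ℝ (Fin (d + 1)) → ℝ)
    (C ρ : ℝ) (hC : 0 < C) (hρ0 : 0 < ρ) (hρ1 : ρ < 1)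
    (a : ℕ → ℝ)
    (M : ℕ → EuclideanSpace ℝ (Fin (d + 1)) →L[ℝ] EuclideanSpace ℝ (Fin (d + 1)))
    (hMsym : ∀ n, IsSelfAdjoint (M n))
    (ha : ∀ n, |a n - a (n + 1)| ≤ C * ρ ^ n)
    (hM : ∀ n, ‖M n - M (n + 1)‖ ≤ C)
    (happrox : ∀ n : ℕ, ∀ x : EuclideanSpace ℝ (Fin (d + 1)),
      ‖x‖ < ρ ^ n → 0 < x (Fin.last d) →
        |u x - a n * x (Fin.last d) - ⟪M n x, x⟫| ≤ ρ ^ (2 * n)) :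
    ∃ (aInf C' : ℝ), 0 < C' ∧
      ∀ x : EuclideanSpace ℝ (Fin (d + 1)),
        ‖x‖ < 1 / 2 → 0 < x (Fin.last d) →
          |u x - aInf * x (Fin.last d)| ≤ C' * ‖x‖ ^ 2 * Real.log (1 / ‖x‖) := by
  classical
  have h1ρ : (0:ℝ) < 1 - ρ := by linarith
  have hdistC : ∀ n, dist (a n) (a (n + 1)) ≤ C * ρ ^ n := fun n => by
    rw [Real.dist_eq]; exact ha n
  have hcauchy : CauchySeq a := cauchySeq_of_le_geometric ρ C hρ1 hdistC
  obtain ⟨aInf, haInf⟩ := cauchySeq_tendsto_of_complete hcauchy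
  have hdist : ∀ n, |a n - aInf| ≤ C * ρ ^ n / (1 - ρ) := fun n => by
    have := dist_le_of_le_geometric_of_tendsto ρ C hρ1 hdistC haInf n
    rwa [Real.dist_eq] at this
  have hMnorm : ∀ n, ‖M n‖ ≤ ‖M 0‖ + C * n := by
    intro n
    induction n with
    | zero => simp
    | succ n ih =>
      have h1 : ‖M (n+1)‖ - ‖M n‖ ≤ ‖M (n+1) - M n‖ := norm_sub_norm_le _ _
      rw [norm_sub_rev] at h1
      have h2 := hM n
      push_cast
      nlinarith
  have hlog2 : (0:ℝ) < Real.log 2 := Real.log_pos (by norm_num)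
  have hlogρ : (0:ℝ) < -Real.log ρ := by
    have := Real.log_neg hρ0 hρ1; linarith
  set K : ℝ := 1 / ρ ^ 2 + C / (ρ * (1 - ρ)) + ‖M 0‖ with hK
  have hKpos : 0 < K := by rw [hK]; positivity
  refine ⟨aInf, K / Real.log 2 + C / (-Real.log ρ), by positivity, ?_⟩
  intro x hx hxd
  have hx0 : 0 < ‖x‖ := by
    rw [norm_pos_iff]
    intro h
    rw [h] at hxd
    simp at hxd
  -- find n with ρ^(n+1) ≤ ‖x‖ < ρ^n
  have hex : ∃ m, ρ ^ m ≤ ‖x‖ := (exists_pow_lt_of_lt_one hx0 hρ1).imp fun m h => h.le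
  have hm0 : Nat.find hex ≠ 0 := by
    intro h
    have := Nat.find_spec hex
    rw [h] at this
    simp at this
    linarith
  obtain ⟨n, hn⟩ := Nat.exists_eq_succ_of_ne_zero hm0
  have hlow : ρ ^ (n + 1) ≤ ‖x‖ := by
    have := Nat.find_spec hex; rwa [hn] at this
  have hhigh : ‖x‖ < ρ ^ n := by
    have := Nat.find_min hex (m := n) (by omega)
    linarith [not_le.mp this]
  have h1 := happrox n x hhigh hxd
  -- coordinate bound
  have hcoord : |x (Fin.last d)| ≤ ‖x‖ := by
    have h := abs_real_inner_le_norm (EuclideanSpace.single (Fin.last d) (1:ℝ)) x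
    rw [EuclideanSpace.inner_single_left, EuclideanSpace.norm_single] at h
    simpa using h
  -- quadratic form bound
  have h3 : |⟪M n x, x⟫| ≤ (‖M 0‖ + C * n) * ‖x‖ ^ 2 := by
    have h := abs_real_inner_le_norm (M n x) x
    have h2 : ‖M n x‖ ≤ ‖M n‖ * ‖x‖ := (M n).le_opNorm x
    have h4 := hMnorm n
    nlinarith [norm_nonneg (M n x), norm_nonneg (M n)]
  set L : ℝ := Real.log (1 / ‖x‖) with hL
  have hLlog : Real.log 2 ≤ L := by
    rw [hL]
    apply Real.log_le_log (by norm_num)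
    rw [le_div_iff₀ hx0]
    linarith
  have hLpos : 0 < L := lt_of_lt_of_le hlog2 hLlog
  have hnL : (n : ℝ) * (-Real.log ρ) ≤ L := by
    have hlog : Real.log ‖x‖ ≤ n * Real.log ρ := by
      calc Real.log ‖x‖ ≤ Real.log (ρ ^ n) := Real.log_le_log hx0 hhigh.le
        _ = n * Real.log ρ := by rw [Real.log_pow]
    rw [hL, one_div, Real.log_inv]
    nlinarith
  -- pointwise bounds
  have e1 : ρ ^ (2 * n) ≤ ‖x‖ ^ 2 / ρ ^ 2 := by
    rw [le_div_iff₀ (by positivity)]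
    have h := pow_le_pow_left₀ (by positivity) hlow 2
    calc ρ ^ (2 * n) * ρ ^ 2 = (ρ ^ (n + 1)) ^ 2 := by ring
      _ ≤ ‖x‖ ^ 2 := h
  have e2 : ρ ^ n ≤ ‖x‖ / ρ := by
    rw [le_div_iff₀ hρ0]
    calc ρ ^ n * ρ = ρ ^ (n + 1) := (pow_succ ρ n).symm
      _ ≤ ‖x‖ := hlow
  -- assemble
  have hsplit : |u x - aInf * x (Fin.last d)| ≤
      |u x - a n * x (Fin.last d) - ⟪M n x, x⟫| + |a n - aInf| * |x (Fin.last d)|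
        + |⟪M n x, x⟫| := by
    have : u x - aInf * x (Fin.last d) =
        (u x - a n * x (Fin.last d) - ⟪M n x, x⟫) + (a n - aInf) * x (Fin.last d)
          + ⟪M n x, x⟫ := by ring
    rw [this]
    calc |_ + _ + _| ≤ |(u x - a n * x (Fin.last d) - ⟪M n x, x⟫) + (a n - aInf) * x (Fin.last d)| + |⟪M n x, x⟫| := abs_add_le _ _
      _ ≤ _ := by
          have := abs_add_le (u x - a n * x (Fin.last d) - ⟪M n x, x⟫) ((a n - aInf) * x (Fin.last d))
          rw [abs_mul] at this
          linarith
  have h2' : |a n - aInf| * |x (Fin.last d)| ≤ C * ρ ^ n / (1 - ρ) * ‖x‖ := by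
    apply mul_le_mul (hdist n) hcoord (abs_nonneg _)
    positivity
  have hmid : |u x - aInf * x (Fin.last d)| ≤ ‖x‖ ^ 2 * (K + C * n) := by
    have e2' : C * ρ ^ n / (1 - ρ) * ‖x‖ ≤ C / (ρ * (1 - ρ)) * ‖x‖ ^ 2 := by
      have step : C * ρ ^ n / (1 - ρ) * ‖x‖ ≤ C * (‖x‖ / ρ) / (1 - ρ) * ‖x‖ := by gcongr
      refine step.trans (le_of_eq ?_)
      field_simp
    have e1' : ρ ^ (2 * n) ≤ 1 / ρ ^ 2 * ‖x‖ ^ 2 := by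
      rw [one_div, inv_mul_eq_div]; exact e1
    rw [hK]
    linarith [h1, h2', h3, e1', e2', hsplit]
  have hfinal : ‖x‖ ^ 2 * (K + C * n) ≤
      (K / Real.log 2 + C / (-Real.log ρ)) * ‖x‖ ^ 2 * L := by
    have b1 : K * Real.log 2 ≤ K * L := mul_le_mul_of_nonneg_left hLlog hKpos.le
    have b2 : C * ((n : ℝ) * (-Real.log ρ)) ≤ C * L := mul_le_mul_of_nonneg_left hnL hC.le
    have hsum : K + C * n ≤ (K / Real.log 2 + C / (-Real.log ρ)) * L := by
      have c1 : K ≤ K / Real.log 2 * L := by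
        rw [div_mul_eq_mul_div, le_div_iff₀ hlog2]; linarith
      have c2 : C * (n : ℝ) ≤ C / (-Real.log ρ) * L := by
        rw [div_mul_eq_mul_div, le_div_iff₀ hlogρ]; linarith
      have : K / Real.log 2 * L + C / (-Real.log ρ) * L
          = (K / Real.log 2 + C / (-Real.log ρ)) * L := by ring
      linarith
    have := mul_le_mul_of_nonneg_left hsum (sq_nonneg ‖x‖)
    calc ‖x‖ ^ 2 * (K + C * n) ≤ ‖x‖ ^ 2 * ((K / Real.log 2 + C / (-Real.log ρ)) * L) := this
      _ = (K / Real.log 2 + C / (-Real.log ρ)) * ‖x‖ ^ 2 * L := by ring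
  calc |u x - aInf * x (Fin.last d)| ≤ ‖x‖ ^ 2 * (K + C * n) := hmid
    _ ≤ _ := hfinal
end

section
/- Let A ⊂ B ⊂ Q₁ be measurable subsets of the unit cube Q₁ ⊂ ℝ^d, and let 0 < σ < 1 satisfy: (1) |A| ≤ σ; (2) whenever Q is a dyadic subcube of Q₁ with |A ∩ Q| > σ|Q|, its dyadic predecessor Q̃ satisfies Q̃ ⊂ B. Then |A| ≤ σ|B|. -/
open MeasureTheory

/-- The closed dyadic cube of generation `n` with index `m` inside `[0,1]^d`. -/
def dyadicCube (d n : ℕ) (m : Fin d → ℕ) : Set (Fin d → ℝ) :=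
  {x | ∀ i, (m i : ℝ) / 2 ^ n ≤ x i ∧ x i ≤ ((m i : ℝ) + 1) / 2 ^ n}

namespace CZ9

open Metric Filter
open scoped ENNReal NNReal

variable {d : ℕ}

lemma cube_eq_Icc (n : ℕ) (m : Fin d → ℕ) :
    dyadicCube d n m
      = Set.Icc (fun i => (m i : ℝ)/2^n) (fun i => ((m i : ℝ)+1)/2^n) := by
  ext x
  simp [dyadicCube, Set.mem_Icc, Pi.le_def, forall_and]

lemma meas_cube (n : ℕ) (m : Fin d → ℕ) : MeasurableSet (dyadicCube d n m) := by
  rw [cube_eq_Icc]; exact measurableSet_Icc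

lemma volume_cube (n : ℕ) (m : Fin d → ℕ) :
    volume (dyadicCube d n m) = ENNReal.ofReal (((2:ℝ)^n)⁻¹) ^ d := by
  rw [cube_eq_Icc, Real.volume_Icc_pi]
  have h : ∀ i : Fin d, ((m i:ℝ)+1)/2^n - (m i:ℝ)/2^n = ((2:ℝ)^n)⁻¹ := by
    intro i
    have : ((2:ℝ)^n) ≠ 0 := by positivity
    field_simp
    ring
  simp only [h, Finset.prod_const, Finset.card_univ, Fintype.card_fin]

lemma exists_strict_of_vol_ne_zero {n n' : ℕ} {m m' : Fin d → ℕ}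
    (h : volume (dyadicCube d n m ∩ dyadicCube d n' m') ≠ 0) :
    ∃ x : Fin d → ℝ,
      (∀ i, (m i:ℝ)/2^n < x i ∧ x i < ((m i:ℝ)+1)/2^n) ∧
      (∀ i, (m' i:ℝ)/2^n' < x i ∧ x i < ((m' i:ℝ)+1)/2^n') := by
  rw [cube_eq_Icc, cube_eq_Icc, Set.Icc_inter_Icc, Real.volume_Icc_pi] at h
  rw [Finset.prod_ne_zero_iff] at h
  have key : ∀ i : Fin d,
      max ((m i:ℝ)/2^n) ((m' i:ℝ)/2^n') < min (((m i:ℝ)+1)/2^n) (((m' i:ℝ)+1)/2^n') := by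
    intro i
    have := h i (Finset.mem_univ i)
    rw [Ne, ENNReal.ofReal_eq_zero, not_le] at this
    have h2 : (((fun i => (m i:ℝ)/2^n) ⊔ fun i => (m' i:ℝ)/2^n') i)
        = max ((m i:ℝ)/2^n) ((m' i:ℝ)/2^n') := rfl
    have h3 : (((fun i => ((m i:ℝ)+1)/2^n) ⊓ fun i => ((m' i:ℝ)+1)/2^n') i)
        = min (((m i:ℝ)+1)/2^n) (((m' i:ℝ)+1)/2^n') := rfl
    rw [h3, h2] at this
    exact lt_of_sub_pos this
  refine ⟨fun i => (max ((m i:ℝ)/2^n) ((m' i:ℝ)/2^n')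
      + min (((m i:ℝ)+1)/2^n) (((m' i:ℝ)+1)/2^n'))/2, ?_, ?_⟩
  · intro i
    have hk := key i
    constructor
    · have := le_max_left ((m i:ℝ)/2^n) ((m' i:ℝ)/2^n'); linarith
    · have := min_le_left (((m i:ℝ)+1)/2^n) (((m' i:ℝ)+1)/2^n'); linarith
  · intro i
    have hk := key i
    constructor
    · have := le_max_right ((m i:ℝ)/2^n) ((m' i:ℝ)/2^n'); linarith
    · have := min_le_right (((m i:ℝ)+1)/2^n) (((m' i:ℝ)+1)/2^n'); linarith

lemma index_eq_of_strict {n n' : ℕ} (h : n ≤ n') {m m' : Fin d → ℕ} {x : Fin d → ℝ}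
    (h1 : ∀ i, (m i:ℝ)/2^n < x i ∧ x i < ((m i:ℝ)+1)/2^n)
    (h2 : ∀ i, (m' i:ℝ)/2^n' < x i ∧ x i < ((m' i:ℝ)+1)/2^n') (i : Fin d) :
    m' i / 2^(n'-n) = m i := by
  have hn' : n' = n + (n' - n) := by omega
  have hpn : (0:ℝ) < 2^n := by positivity
  have hpk : (0:ℝ) < 2^(n'-n) := by positivity
  have hA : (m i:ℝ) * 2^(n'-n) < (m' i : ℝ) + 1 := by
    have hlt : (m i:ℝ)/2^n < ((m' i:ℝ)+1)/2^n' := (h1 i).1.trans (h2 i).2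
    rw [hn', pow_add, div_lt_div_iff₀ hpn (by positivity)] at hlt
    nlinarith
  have hB : (m' i:ℝ) < ((m i:ℝ)+1) * 2^(n'-n) := by
    have hlt : (m' i:ℝ)/2^n' < ((m i:ℝ)+1)/2^n := (h2 i).1.trans (h1 i).2
    rw [hn', pow_add, div_lt_div_iff₀ (by positivity) hpn] at hlt
    nlinarith
  have hA' : m i * 2^(n'-n) ≤ m' i := by
    have : (m i * 2^(n'-n) : ℕ) < m' i + 1 := by
      exact_mod_cast (by push_cast; linarith :
        ((m i * 2^(n'-n) : ℕ) : ℝ) < ((m' i + 1 : ℕ) : ℝ))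
    omega
  have hB' : m' i < (m i + 1) * 2^(n'-n) := by
    exact_mod_cast (by push_cast; linarith :
      ((m' i : ℕ) : ℝ) < (((m i + 1) * 2^(n'-n) : ℕ) : ℝ))
  exact Nat.div_eq_of_lt_le hA' hB'

/-- The index of the dyadic cube of generation `n` containing `x`. -/
noncomputable def mc (n : ℕ) (x : Fin d → ℝ) (i : Fin d) : ℕ := ⌊x i * 2^n⌋₊

lemma mem_cube_mc {x : Fin d → ℝ} (hx0 : ∀ i, 0 ≤ x i) (n : ℕ) :
    x ∈ dyadicCube d n (mc n x) := by
  intro i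
  have hpn : (0:ℝ) < 2^n := by positivity
  constructor
  · rw [div_le_iff₀ hpn]
    exact Nat.floor_le (mul_nonneg (hx0 i) (by positivity))
  · rw [le_div_iff₀ hpn]
    exact (Nat.lt_floor_add_one _).le

lemma mc_lt {x : Fin d → ℝ} (hx1 : ∀ i, x i < 1) (n : ℕ) (i : Fin d) :
    mc n x i < 2^n := by
  have hpn : (0:ℝ) < 2^n := by positivity
  apply Nat.floor_lt' (by positivity : (2:ℕ)^n ≠ 0) |>.2
  · push_cast
    nlinarith [hx1 i]

lemma mc_div {x : Fin d → ℝ} {j k : ℕ} (h : j ≤ k) (i : Fin d) :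
    mc k x i / 2^(k-j) = mc j x i := by
  have : x i * 2^j = (x i * 2^k) / (2^(k-j) : ℕ) := by
    have : (2:ℝ)^k = 2^j * 2^(k-j) := by rw [← pow_add]; congr 1; omega
    push_cast
    rw [this]; field_simp
  rw [mc, mc, this, Nat.floor_div_natCast]

lemma mc_succ_div {x : Fin d → ℝ} (n : ℕ) (i : Fin d) :
    mc (n+1) x i / 2 = mc n x i := by
  have := mc_div (x := x) (Nat.le_succ n) i
  simpa using this

lemma mc_zero {x : Fin d → ℝ} (hx1 : ∀ i, x i < 1) (hx0 : ∀ i, 0 ≤ x i) :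
    mc 0 x = fun _ => 0 := by
  funext i
  rw [mc, Nat.floor_eq_zero]
  have := hx1 i; have := hx0 i
  norm_num; linarith

lemma strict_mem_cube_mc {x : Fin d → ℝ} (hx0 : ∀ i, 0 ≤ x i)
    (hirr : ∀ (i : Fin d) (q : ℚ), x i ≠ (q:ℝ)) (n : ℕ) (i : Fin d) :
    (mc n x i : ℝ)/2^n < x i ∧ x i < ((mc n x i : ℝ)+1)/2^n := by
  have hpn : (0:ℝ) < 2^n := by positivity
  constructor
  · rw [div_lt_iff₀ hpn]
    refine lt_of_le_of_ne (Nat.floor_le (mul_nonneg (hx0 i) (by positivity))) ?_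
    intro hE
    exact hirr i ((mc n x i : ℚ)/2^n) (by push_cast; rw [eq_div_iff hpn.ne']; linarith)
  · rw [lt_div_iff₀ hpn]
    exact Nat.lt_floor_add_one _

lemma closedBall_eq_Icc (x : Fin d → ℝ) {r : ℝ} (hr : 0 ≤ r) :
    closedBall x r = Set.Icc (fun i => x i - r) (fun i => x i + r) := by
  ext y
  simp only [mem_closedBall, Set.mem_Icc, dist_pi_le_iff hr, Real.dist_eq, abs_le, Pi.le_def]
  constructor
  · intro h; exact ⟨fun i => by linarith [(h i).1], fun i => by linarith [(h i).2]⟩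
  · intro h i; constructor <;> [linarith [h.1 i]; linarith [h.2 i]]

lemma volume_ball (x : Fin d → ℝ) {r : ℝ} (hr : 0 ≤ r) :
    volume (closedBall x r) = ENNReal.ofReal (2*r) ^ d := by
  rw [closedBall_eq_Icc x hr, Real.volume_Icc_pi]
  have h : ∀ i : Fin d, (x i + r) - (x i - r) = 2*r := fun i => by ring
  simp only [h, Finset.prod_const, Finset.card_univ, Fintype.card_fin]

lemma bad_of_density {A : Set (Fin d → ℝ)} (hAmeas : MeasurableSet A)
    {σ : ℝ} (hσ0 : 0 < σ) (hσ1 : σ < 1) {x : Fin d → ℝ}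
    (hx0 : ∀ i, 0 ≤ x i)
    (hx : Tendsto (fun r => volume (A ∩ closedBall x r) / volume (closedBall x r))
      (nhdsWithin 0 (Set.Ioi 0)) (nhds 1)) :
    ∃ n, ENNReal.ofReal σ * volume (dyadicCube d n (mc n x)) <
      volume (A ∩ dyadicCube d n (mc n x)) := by
  set ε : ℝ := (1-σ)/2^d with hεdef
  have hε : 0 < ε := div_pos (by linarith) (by positivity)
  have hε1 : ε < 1 := by
    rw [hεdef, div_lt_one (by positivity)]
    have : (1:ℝ) ≤ 2^d := one_le_pow₀ (by norm_num)
    linarith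
  set c : ℝ≥0∞ := ENNReal.ofReal (1 - ε) with hcdef
  have hc : c < 1 := by
    rw [hcdef, ← ENNReal.ofReal_one]
    exact ENNReal.ofReal_lt_ofReal_iff_of_nonneg (by linarith) |>.2 (by linarith)
  have hev : ∀ᶠ r in nhdsWithin 0 (Set.Ioi 0),
      c < volume (A ∩ closedBall x r) / volume (closedBall x r) :=
    hx.eventually_const_lt hc
  have hseq : Tendsto (fun n : ℕ => ((2:ℝ)^n)⁻¹) atTop (nhdsWithin 0 (Set.Ioi 0)) := by
    apply tendsto_nhdsWithin_of_tendsto_nhds_of_eventually_within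
    · have := tendsto_pow_atTop_nhds_zero_of_lt_one (by norm_num : (0:ℝ) ≤ 2⁻¹)
        (by norm_num : (2:ℝ)⁻¹ < 1)
      simpa [inv_pow] using this
    · filter_upwards with n
      exact Set.mem_Ioi.2 (by positivity)
  obtain ⟨n, hn⟩ := (hseq.eventually hev).exists
  refine ⟨n, ?_⟩
  set r : ℝ := ((2:ℝ)^n)⁻¹ with hrdef
  have hr0 : 0 < r := by positivity
  set v : ℝ := r ^ d with hvdef
  have hv0 : 0 < v := by positivity
  set w : ℝ := (2*r) ^ d with hwdef
  have hw0 : 0 < w := by positivity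
  have hwv : w = 2^d * v := by rw [hwdef, hvdef, mul_pow]
  have hVQ : volume (dyadicCube d n (mc n x)) = ENNReal.ofReal v := by
    rw [volume_cube, hvdef, ENNReal.ofReal_pow hr0.le]
  have hVB : volume (closedBall x r) = ENNReal.ofReal w := by
    rw [volume_ball x hr0.le, hwdef, ENNReal.ofReal_pow (by positivity)]
  have hVBne : volume (closedBall x r) ≠ 0 := by
    rw [hVB]; simp [ENNReal.ofReal_eq_zero, not_le, hw0]
  have hVBnt : volume (closedBall x r) ≠ ⊤ := by rw [hVB]; exact ENNReal.ofReal_ne_top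
  have hmul : c * volume (closedBall x r) < volume (A ∩ closedBall x r) := by
    have := (ENNReal.mul_lt_mul_iff_left hVBne hVBnt).2 hn
    calc c * volume (closedBall x r)
        < (volume (A ∩ closedBall x r) / volume (closedBall x r)) * volume (closedBall x r) := by
          exact this
      _ = volume (A ∩ closedBall x r) := ENNReal.div_mul_cancel hVBne hVBnt
  have hABfin : volume (A ∩ closedBall x r) ≠ ⊤ :=
    (lt_of_le_of_lt (measure_mono Set.inter_subset_right) hVBnt.lt_top).ne
  set a : ℝ := (volume (A ∩ closedBall x r)).toReal with hadef
  have ha : (1-ε) * w < a := by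
    have h1 : (c * volume (closedBall x r)).toReal = (1-ε) * w := by
      rw [ENNReal.toReal_mul, hcdef, hVB, ENNReal.toReal_ofReal (by linarith),
        ENNReal.toReal_ofReal hw0.le]
    rw [← h1, hadef]
    exact ENNReal.toReal_lt_toReal (by finiteness) hABfin |>.2 hmul
  have hsplit : volume (closedBall x r ∩ A) + volume (closedBall x r \ A) =
      volume (closedBall x r) := measure_inter_add_diff _ hAmeas
  have hdiff : (volume (closedBall x r \ A)).toReal = w - a := by
    have hfin1 : volume (closedBall x r ∩ A) ≠ ⊤ :=
      (lt_of_le_of_lt (measure_mono Set.inter_subset_left) hVBnt.lt_top).ne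
    have hfin2 : volume (closedBall x r \ A) ≠ ⊤ :=
      (lt_of_le_of_lt (measure_mono Set.diff_subset) hVBnt.lt_top).ne
    have := congrArg ENNReal.toReal hsplit
    rw [ENNReal.toReal_add hfin1 hfin2, hVB, ENNReal.toReal_ofReal hw0.le] at this
    have hia : (volume (closedBall x r ∩ A)).toReal = a := by rw [hadef, Set.inter_comm]
    linarith [this, hia ▸ this]
  have hlen : ((2:ℝ)^n)⁻¹ = r := rfl
  have hQsub : dyadicCube d n (mc n x) ⊆ closedBall x r := by
    intro y hy
    rw [mem_closedBall, dist_pi_le_iff hr0.le]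
    intro i
    rw [Real.dist_eq, abs_le]
    have h1 := hy i
    have h2 := mem_cube_mc hx0 n i
    have hstep : ((mc n x i : ℝ)+1)/2^n = (mc n x i : ℝ)/2^n + r := by
      rw [← hlen]; field_simp
    constructor <;> [linarith [h1.1, h2.2, hstep]; linarith [h1.2, h2.1, hstep]]
  have hVQnt : volume (dyadicCube d n (mc n x)) ≠ ⊤ := by
    rw [hVQ]; exact ENNReal.ofReal_ne_top
  have hsplitQ : volume (dyadicCube d n (mc n x) ∩ A) + volume (dyadicCube d n (mc n x) \ A) =
      volume (dyadicCube d n (mc n x)) := measure_inter_add_diff _ hAmeas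
  have hfinQA : volume (dyadicCube d n (mc n x) ∩ A) ≠ ⊤ :=
    (lt_of_le_of_lt (measure_mono Set.inter_subset_left) hVQnt.lt_top).ne
  have hfinQd : volume (dyadicCube d n (mc n x) \ A) ≠ ⊤ :=
    (lt_of_le_of_lt (measure_mono Set.diff_subset) hVQnt.lt_top).ne
  set t : ℝ := (volume (dyadicCube d n (mc n x) ∩ A)).toReal with htdef
  set γ : ℝ := (volume (dyadicCube d n (mc n x) \ A)).toReal with hγdef
  have hsum : t + γ = v := by
    have := congrArg ENNReal.toReal hsplitQ
    rw [ENNReal.toReal_add hfinQA hfinQd, hVQ, ENNReal.toReal_ofReal hv0.le] at this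
    exact this
  have hγle : γ ≤ w - a := by
    rw [hγdef, ← hdiff]
    exact ENNReal.toReal_le_toReal hfinQd
      ((lt_of_le_of_lt (measure_mono Set.diff_subset) hVBnt.lt_top).ne) |>.2
      (measure_mono (Set.diff_subset_diff_left hQsub))
  have hεw : ε * w = (1-σ) * v := by
    rw [hwv, hεdef]
    field_simp
  have ht : σ * v < t := by nlinarith [hsum, hγle, ha, hεw]
  have hAQ : volume (A ∩ dyadicCube d n (mc n x)) = ENNReal.ofReal t := by
    rw [Set.inter_comm, htdef, ENNReal.ofReal_toReal hfinQA]
  rw [hAQ, hVQ, ← ENNReal.ofReal_mul hσ0.le]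
  exact (ENNReal.ofReal_lt_ofReal_iff (by nlinarith)).2 ht

/-- The badness predicate: `|A ∩ Q| > σ |Q|`. -/
def Bad (A : Set (Fin d → ℝ)) (σ : ℝ) (n : ℕ) (m : Fin d → ℕ) : Prop :=
  ENNReal.ofReal σ * volume (dyadicCube d n m) < volume (A ∩ dyadicCube d n m)

/-- Selected cubes: not bad, but having a bad child. -/
def Sel (A : Set (Fin d → ℝ)) (σ : ℝ) : Set (ℕ × (Fin d → ℕ)) :=
  {p | ¬ Bad A σ p.1 p.2 ∧
    ∃ m' : Fin d → ℕ, (∀ i, m' i / 2 = p.2 i) ∧ (∀ i, m' i < 2^(p.1+1)) ∧ Bad A σ (p.1+1) m'}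

/-- Maximal selected cubes: selected cubes with no selected strict ancestor. -/
def SelMax (A : Set (Fin d → ℝ)) (σ : ℝ) : Set (ℕ × (Fin d → ℕ)) :=
  {p | p ∈ Sel A σ ∧ ∀ j < p.1, ((j, fun i => p.2 i / 2^(p.1-j)) : ℕ × (Fin d → ℕ)) ∉ Sel A σ}

lemma selmax_eq {A : Set (Fin d → ℝ)} {σ : ℝ} {p q : ℕ × (Fin d → ℕ)}
    (hp : p ∈ SelMax A σ) (hq : q ∈ SelMax A σ) (hle : p.1 ≤ q.1)
    (hvol : volume (dyadicCube d p.1 p.2 ∩ dyadicCube d q.1 q.2) ≠ 0) : p = q := by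
  obtain ⟨x, hx1, hx2⟩ := exists_strict_of_vol_ne_zero hvol
  have hidx : ∀ i, q.2 i / 2^(q.1-p.1) = p.2 i := index_eq_of_strict hle hx1 hx2
  rcases eq_or_lt_of_le hle with heq | hlt
  · have h2 : p.2 = q.2 := by
      funext i
      have := hidx i
      rw [← heq] at this
      simpa using this.symm
    exact Prod.ext heq h2
  · exfalso
    apply hq.2 p.1 hlt
    have hfe : (fun i => q.2 i / 2^(q.1-p.1)) = p.2 := funext hidx
    rw [hfe]
    exact hp.1

end CZ9

/-- Calderón–Zygmund cube decomposition corollary: if `A ⊆ B ⊆ Q₁` are measurable,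
`|A| ≤ σ`, and every dyadic cube `Q` with `|A ∩ Q| > σ|Q|` has its predecessor `Q̃`
contained in `B`, then `|A| ≤ σ |B|`. -/
theorem stmt_9 {d : ℕ} (A B : Set (Fin d → ℝ))
    (hAmeas : MeasurableSet A) (hBmeas : MeasurableSet B)
    (hAB : A ⊆ B) (hBQ : B ⊆ Set.Icc 0 1)
    (σ : ℝ) (hσ0 : 0 < σ) (hσ1 : σ < 1)
    (hA : volume A ≤ ENNReal.ofReal σ)
    (hCZ : ∀ (n : ℕ) (m : Fin d → ℕ), (∀ i, m i < 2 ^ (n + 1)) →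
      ENNReal.ofReal σ * volume (dyadicCube d (n + 1) m) <
          volume (A ∩ dyadicCube d (n + 1) m) →
        dyadicCube d n (fun i => m i / 2) ⊆ B) :
    volume A ≤ ENNReal.ofReal σ * volume B := by
  classical
  open CZ9 in
  have hAsub : A ⊆ Set.Icc 0 1 := fun x hx => hBQ (hAB hx)
  have hNotBad0 : ¬ CZ9.Bad A σ 0 (fun _ => 0) := by
    intro hbad
    have hsub : A ⊆ dyadicCube d 0 (fun _ => 0) := by
      intro x hx i
      have h := hAsub hx
      have h0 : (0:ℝ) ≤ x i := h.1 i
      have h1 : x i ≤ 1 := h.2 i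
      norm_num
      exact ⟨h0, h1⟩
    have hinter : A ∩ dyadicCube d 0 (fun _ => 0) = A :=
      Set.inter_eq_self_of_subset_left hsub
    have hv : volume (dyadicCube d 0 (fun _ => 0)) = 1 := by
      rw [CZ9.volume_cube]; norm_num
    unfold CZ9.Bad at hbad
    rw [hinter, hv, mul_one] at hbad
    exact absurd hA (not_le.2 hbad)
  set R : Set (Fin d → ℝ) := ⋃ (i : Fin d), ⋃ (q : ℚ), {x : Fin d → ℝ | x i = (q:ℝ)} with hRdef
  have hR : volume R = 0 := by
    refine measure_iUnion_null fun i => measure_iUnion_null fun q => ?_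
    rw [MeasureTheory.volume_pi]
    exact MeasureTheory.Measure.pi_hyperplane (μ := fun _ : Fin d => (volume : Measure ℝ)) i ((q:ℝ))
  have hae : ∀ᵐ x ∂(volume.restrict A),
      x ∈ A ∧ x ∉ R ∧ ∃ n, CZ9.Bad A σ n (CZ9.mc n x) := by
    have hnR : ∀ᵐ x ∂(volume : Measure (Fin d → ℝ)), x ∉ R := by
      rw [← MeasureTheory.compl_mem_ae_iff] at hR
      exact hR
    filter_upwards [ae_restrict_mem hAmeas, ae_restrict_of_ae hnR,
      Besicovitch.ae_tendsto_measure_inter_div volume A] with x h1 h2 h3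
    exact ⟨h1, h2, CZ9.bad_of_density hAmeas hσ0 hσ1 (fun i => (hAsub h1).1 i) h3⟩
  have hcov : ∀ x, x ∈ A → x ∉ R → (∃ n, CZ9.Bad A σ n (CZ9.mc n x)) →
      ∃ p ∈ CZ9.SelMax A σ, x ∈ dyadicCube d p.1 p.2 := by
    intro x hxA hxR hex
    have hx01 := hAsub hxA
    have hx0 : ∀ i, 0 ≤ x i := fun i => hx01.1 i
    have hxirr : ∀ (i : Fin d) (q : ℚ), x i ≠ (q:ℝ) := by
      intro i q hq
      exact hxR (Set.mem_iUnion.2 ⟨i, Set.mem_iUnion.2 ⟨q, hq⟩⟩)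
    have hx1 : ∀ i, x i < 1 := by
      intro i
      refine lt_of_le_of_ne (hx01.2 i) fun h => hxirr i 1 (by rw [h]; norm_num)
    have hN := Nat.find_spec hex
    have hN0 : Nat.find hex ≠ 0 := by
      intro h0
      rw [h0, CZ9.mc_zero hx1 hx0] at hN
      exact hNotBad0 hN
    obtain ⟨k, hk⟩ : ∃ k, Nat.find hex = k + 1 := ⟨Nat.find hex - 1, by omega⟩
    have hSel : ((k, CZ9.mc k x) : ℕ × (Fin d → ℕ)) ∈ CZ9.Sel A σ := by
      refine ⟨Nat.find_min hex (by omega), CZ9.mc (k+1) x,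
        fun i => CZ9.mc_succ_div k i, fun i => CZ9.mc_lt hx1 (k+1) i, ?_⟩
      rw [← hk]; exact hN
    have hs : ∃ j, ((j, CZ9.mc j x) : ℕ × (Fin d → ℕ)) ∈ CZ9.Sel A σ := ⟨k, hSel⟩
    refine ⟨(Nat.find hs, CZ9.mc (Nat.find hs) x), ⟨Nat.find_spec hs, ?_⟩,
      CZ9.mem_cube_mc hx0 _⟩
    intro j hj
    have hfe : (fun i => CZ9.mc (Nat.find hs) x i / 2^(Nat.find hs - j)) = CZ9.mc j x :=
      funext (CZ9.mc_div (le_of_lt hj))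
    rw [hfe]
    exact Nat.find_min hs hj
  set U : Set (Fin d → ℝ) :=
    ⋃ p : ↥(CZ9.SelMax A σ), dyadicCube d (p : ℕ × (Fin d → ℕ)).1 (p : ℕ × (Fin d → ℕ)).2
    with hUdef
  have hAU0 : volume (A \ U) = 0 := by
    have h2 : A \ U ⊆
        {x | ¬(x ∈ A ∧ x ∉ R ∧ ∃ n, CZ9.Bad A σ n (CZ9.mc n x))} ∩ A := by
      rintro x ⟨hxA, hxU⟩
      refine ⟨?_, hxA⟩
      rintro ⟨ha, hb, hc⟩
      obtain ⟨p, hp, hxp⟩ := hcov x ha hb hc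
      exact hxU (Set.mem_iUnion.2 ⟨⟨p, hp⟩, hxp⟩)
    refine measure_mono_null h2 ?_
    rw [← Measure.restrict_apply' hAmeas]
    exact ae_iff.1 hae
  have hUB : U ⊆ B := by
    rw [hUdef]
    refine Set.iUnion_subset fun p => ?_
    obtain ⟨⟨hnb, m', hdiv, hbound, hbad⟩, _⟩ := p.2
    have := hCZ (p : ℕ × (Fin d → ℕ)).1 m' hbound hbad
    rwa [show (fun i => m' i / 2) = (p : ℕ × (Fin d → ℕ)).2 from funext hdiv] at this
  have hdisj : Pairwise (Function.onFun (MeasureTheory.AEDisjoint volume)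
      fun p : ↥(CZ9.SelMax A σ) =>
        dyadicCube d (p : ℕ × (Fin d → ℕ)).1 (p : ℕ × (Fin d → ℕ)).2) := by
    intro p q hpq
    have hne : (p : ℕ × (Fin d → ℕ)) ≠ (q : ℕ × (Fin d → ℕ)) :=
      fun h => hpq (Subtype.ext h)
    rw [Function.onFun, MeasureTheory.AEDisjoint]
    by_contra h
    rcases le_total (p : ℕ × (Fin d → ℕ)).1 (q : ℕ × (Fin d → ℕ)).1 with hle | hle
    · exact hne (CZ9.selmax_eq p.2 q.2 hle h)
    · exact hne ((CZ9.selmax_eq q.2 p.2 hle (by rwa [Set.inter_comm])).symm)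
  have hsum : ∑' p : ↥(CZ9.SelMax A σ),
      volume (dyadicCube d (p : ℕ × (Fin d → ℕ)).1 (p : ℕ × (Fin d → ℕ)).2)
      = volume U := by
    rw [hUdef]
    exact (MeasureTheory.measure_iUnion₀ hdisj
      fun p => (CZ9.meas_cube _ _).nullMeasurableSet).symm
  calc volume A ≤ volume (A ∩ U) + volume (A \ U) := by
        conv_lhs => rw [← Set.inter_union_diff A U]
        exact measure_union_le _ _
    _ = volume (A ∩ U) := by rw [hAU0, add_zero]
    _ = volume (⋃ p : ↥(CZ9.SelMax A σ),
        A ∩ dyadicCube d (p : ℕ × (Fin d → ℕ)).1 (p : ℕ × (Fin d → ℕ)).2) := by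
        rw [hUdef, Set.inter_iUnion]
    _ ≤ ∑' p : ↥(CZ9.SelMax A σ),
        volume (A ∩ dyadicCube d (p : ℕ × (Fin d → ℕ)).1 (p : ℕ × (Fin d → ℕ)).2) :=
        measure_iUnion_le _
    _ ≤ ∑' p : ↥(CZ9.SelMax A σ),
        ENNReal.ofReal σ * volume (dyadicCube d (p : ℕ × (Fin d → ℕ)).1
          (p : ℕ × (Fin d → ℕ)).2) := by
        refine ENNReal.tsum_le_tsum fun p => ?_
        exact not_lt.1 p.2.1.1
    _ = ENNReal.ofReal σ * ∑' p : ↥(CZ9.SelMax A σ),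
        volume (dyadicCube d (p : ℕ × (Fin d → ℕ)).1 (p : ℕ × (Fin d → ℕ)).2) :=
        ENNReal.tsum_mul_left
    _ = ENNReal.ofReal σ * volume U := by rw [hsum]
    _ ≤ ENNReal.ofReal σ * volume B := mul_le_mul_right (measure_mono hUB) _
end
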